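/- For partitions λ and μ of n, if λ differs from μ by moving a box from a shorter row to a longer row (so λ dominates μ minimally), then the Kostka number K_{νλ} ≤ K_{νμ} for every partition ν of n. More generally, if μ is dominated by λ in dominance order, then K_{νμ} ≥ K_{νλ}. -/

import Mathlib

/-- The cells of the Young diagram of a partition `p ⊢ n`. -/
def cellsOf {n : ℕ} (p : Nat.Partition n) : Finset (ℕ × ℕ) :=
  (Finset.range n ×ˢ Finset.range n).filter
    fun c => c.1 < (p.parts.filter fun a => c.2 < a).card

/-- The `i`-th part (0-indexed) of the partition `p`, parts in decreasing order
(`0` beyond the last part). -/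
def partSeq {n : ℕ} (p : Nat.Partition n) (i : ℕ) : ℕ :=
  ((p.parts.sort (· ≤ ·)).reverse).getD i 0

/-- The Kostka number `K_{νμ}`: the number of semistandard Young tableaux of shape
`ν` and content `μ` (weakly increasing rows, strictly increasing columns, with
`μ_i` entries equal to `i`). -/
noncomputable def kostka {n : ℕ} (ν μ : Nat.Partition n) : ℕ :=
  Nat.card {T : cellsOf ν → Fin n //
    (∀ c d : cellsOf ν, c.1.1 = d.1.1 → c.1.2 < d.1.2 → T c ≤ T d) ∧
    (∀ c d : cellsOf ν, c.1.2 = d.1.2 → c.1.1 < d.1.1 → T c < T d) ∧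
    ∀ i : Fin n, (Finset.univ.filter fun c => T c = i).card = partSeq μ (i : ℕ)}

/-- Dominance order on partitions of `n`: `μ ⊴ l` iff all prefix sums of `μ`
are at most those of `l`. -/
def Dominates {n : ℕ} (l μ : Nat.Partition n) : Prop :=
  ∀ i : ℕ, ∑ j ∈ Finset.range i, partSeq μ j ≤ ∑ j ∈ Finset.range i, partSeq l j

theorem sum_getD (l : List ℕ) (n : ℕ) (h : l.length ≤ n) :
    ∑ j ∈ Finset.range n, l.getD j 0 = l.sum := by
  induction l generalizing n with
  | nil => simp
  | cons a t ih =>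
    cases n with
    | zero => simp at h
    | succ m =>
      rw [Finset.sum_range_succ']
      simp only [List.getD_cons_succ, List.getD_cons_zero]
      rw [ih m (by simpa using h)]
      simp [Nat.add_comm]

theorem card_parts_le {n : ℕ} (p : Nat.Partition n) : Multiset.card p.parts ≤ n := by
  have h := Multiset.card_nsmul_le_sum (s := p.parts) (fun x hx => p.parts_pos hx)
  simpa [p.parts_sum] using h

theorem part_le {n : ℕ} (p : Nat.Partition n) {a : ℕ} (ha : a ∈ p.parts) : a ≤ n := by
  have := Multiset.single_le_sum (fun x (_ : x ∈ p.parts) => Nat.zero_le x) a ha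
  simpa [p.parts_sum] using this

theorem sum_partSeq_aux {n : ℕ} (p : Nat.Partition n) :
    ∑ j ∈ Finset.range n, ((p.parts.sort (· ≤ ·)).reverse).getD j 0 = n := by
  rw [sum_getD _ n (by simpa using card_parts_le p)]
  rw [List.sum_reverse]
  have : ((p.parts.sort (· ≤ ·) : List ℕ) : Multiset ℕ).sum = p.parts.sum := by
    rw [Multiset.sort_eq]
  rw [Multiset.sum_coe] at this
  exact this.trans p.parts_sum

theorem partSeq_anti {n : ℕ} (p : Nat.Partition n) {i j : ℕ} (hij : i ≤ j) :
    ((p.parts.sort (· ≤ ·)).reverse).getD j 0 ≤ ((p.parts.sort (· ≤ ·)).reverse).getD i 0 := by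
  set l := (p.parts.sort (· ≤ ·)) with hl
  by_cases hj : j < l.reverse.length
  · have hi : i < l.reverse.length := lt_of_le_of_lt (by omega) hj
    rw [List.getD_eq_getElem _ _ hj, List.getD_eq_getElem _ _ hi]
    rw [List.getElem_reverse, List.getElem_reverse]
    have hs : l.Pairwise (· ≤ ·) := Multiset.pairwise_sort _ _
    have hlen : j < l.length := by simpa using hj
    have := hs.rel_get_of_le (a := ⟨l.length - 1 - j, by omega⟩) (b := ⟨l.length -1 - i, by omega⟩) (by simp [Fin.le_def]; omega)
    simpa [List.get_eq_getElem] using this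
  · rw [List.getD_eq_default _ _ (by omega)]
    exact Nat.zero_le _

section Cells
variable {n : ℕ} {ν : Nat.Partition n}

def colLen (p : Nat.Partition n) (j : ℕ) : ℕ := (p.parts.filter fun a => j < a).card

theorem part_le' (p : Nat.Partition n) {a : ℕ} (ha : a ∈ p.parts) : a ≤ n := by
  have := Multiset.single_le_sum (fun x (_ : x ∈ p.parts) => Nat.zero_le x) a ha
  simpa [p.parts_sum] using this

theorem card_parts_le' (p : Nat.Partition n) : Multiset.card p.parts ≤ n := by
  have h := Multiset.card_nsmul_le_sum (s := p.parts) (fun x hx => p.parts_pos hx)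
  simpa [p.parts_sum] using h

theorem colLen_le (p : Nat.Partition n) (j : ℕ) : colLen p j ≤ n :=
  le_trans (Multiset.card_le_card (Multiset.filter_le _ _)) (card_parts_le' p)

theorem colLen_anti (p : Nat.Partition n) {j j' : ℕ} (h : j ≤ j') :
    colLen p j' ≤ colLen p j :=
  Multiset.card_le_card (Multiset.monotone_filter_right _ (fun a ha => lt_of_le_of_lt h ha))

theorem mem_cellsOf (p : Nat.Partition n) (x : ℕ × ℕ) :
    x ∈ cellsOf p ↔ x.1 < colLen p x.2 := by
  constructor
  · intro hx
    simpa [cellsOf, colLen] using (Finset.mem_filter.mp hx).2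
  · intro hx
    have h1 : x.1 < n := lt_of_lt_of_le hx (colLen_le p _)
    have h2 : x.2 < n := by
      have hpos : 0 < colLen p x.2 := Nat.pos_of_ne_zero (by omega)
      obtain ⟨a, ha⟩ := Multiset.card_pos_iff_exists_mem.mp hpos
      have ham := Multiset.mem_filter.mp ha
      exact lt_of_lt_of_le ham.2 (part_le' p ham.1)
    simp [cellsOf, Finset.mem_filter, Finset.mem_product, h1, h2, colLen] at hx ⊢
    exact hx

theorem cell_lt (x : ℕ × ℕ) (hx : x ∈ cellsOf ν) : x.1 < n ∧ x.2 < n := by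
  have := (Finset.mem_filter.mp hx).1
  have := Finset.mem_product.mp this
  simpa using this

theorem mem_cells_of_col_le {i j j' : ℕ} (h : (i, j) ∈ cellsOf ν) (hj : j' ≤ j) :
    (i, j') ∈ cellsOf ν := by
  rw [mem_cellsOf] at h ⊢
  exact lt_of_lt_of_le h (colLen_anti ν hj)

theorem mem_cells_of_row_le {i i' j : ℕ} (h : (i, j) ∈ cellsOf ν) (hi : i' ≤ i) :
    (i', j) ∈ cellsOf ν := by
  rw [mem_cellsOf] at h ⊢
  exact lt_of_le_of_lt hi h

/-- weakly increasing rows -/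
def Rows (T : cellsOf ν → Fin n) : Prop :=
  ∀ c d : cellsOf ν, c.1.1 = d.1.1 → c.1.2 < d.1.2 → T c ≤ T d

/-- strictly increasing columns -/
def Cols (T : cellsOf ν → Fin n) : Prop :=
  ∀ c d : cellsOf ν, c.1.2 = d.1.2 → c.1.1 < d.1.1 → T c < T d

noncomputable def cnt (T : cellsOf ν → Fin n) (v : Fin n) : ℕ :=
  (Finset.univ.filter fun c => T c = v).card

noncomputable def ccnt (T : cellsOf ν → Fin n) (v : Fin n) (j : ℕ) : ℕ :=
  ((Finset.univ.filter fun c : cellsOf ν => c.1.2 = j).filter fun c => T c = v).card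

theorem ccnt_le_one {T : cellsOf ν → Fin n} (hcol : Cols T) (v : Fin n) (j : ℕ) :
    ccnt T v j ≤ 1 := by
  apply Finset.card_le_one.mpr
  intro a ha b hb
  simp only [Finset.mem_filter, Finset.mem_univ, true_and] at ha hb
  rcases lt_trichotomy a.1.1 b.1.1 with h | h | h
  · have := hcol a b (by omega) h
    rw [ha.2, hb.2] at this
    exact absurd this (lt_irrefl _)
  · exact Subtype.ext (Prod.ext h (by omega))
  · have := hcol b a (by omega) h
    rw [ha.2, hb.2] at this
    exact absurd this (lt_irrefl _)

theorem sum_ccnt (T : cellsOf ν → Fin n) (v : Fin n) :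
    ∑ j ∈ Finset.range n, ccnt T v j = cnt T v := by
  rw [cnt, Finset.card_eq_sum_card_fiberwise
    (f := fun c : cellsOf ν => c.1.2) (t := Finset.range n)
    (fun x _ => Finset.mem_range.mpr (cell_lt x.1 x.2).2)]
  apply Finset.sum_congr rfl
  intro j _
  rw [ccnt]
  congr 1
  ext y
  simp only [Finset.mem_filter, Finset.mem_univ, true_and]
  tauto

theorem ccnt_pos_iff (T : cellsOf ν → Fin n) (v : Fin n) (j : ℕ) :
    0 < ccnt T v j ↔ ∃ c : cellsOf ν, c.1.2 = j ∧ T c = v := by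
  rw [ccnt, Finset.card_pos]
  constructor
  · rintro ⟨c, hc⟩
    simp only [Finset.mem_filter, Finset.mem_univ, true_and] at hc
    exact ⟨c, hc⟩
  · rintro ⟨c, hc⟩
    exact ⟨c, by simp only [Finset.mem_filter, Finset.mem_univ, true_and]; exact hc⟩

end Cells

theorem sum_Icc_split (f : ℕ → ℕ) (a m b : ℕ) (ham : a ≤ m + 1) (hmb : m ≤ b) :
    ∑ j ∈ Finset.Icc a b, f j = ∑ j ∈ Finset.Icc a m, f j + ∑ j ∈ Finset.Icc (m+1) b, f j := by
  have h1 : Finset.Icc a b = Finset.Ico a (b+1) := by rw [Finset.Ico_add_one_right_eq_Icc]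
  have h2 : Finset.Icc a m = Finset.Ico a (m+1) := by rw [Finset.Ico_add_one_right_eq_Icc]
  have h3 : Finset.Icc (m+1) b = Finset.Ico (m+1) (b+1) := by rw [Finset.Ico_add_one_right_eq_Icc]
  rw [h1, h2, h3, Finset.sum_Ico_consecutive _ ham (by omega)]

section Pick
variable {n : ℕ} {ν : Nat.Partition n}

/-- column `j` carries a "free plus" for values `v`/`w` -/
def FreeP (T : cellsOf ν → Fin n) (v w : Fin n) (j : ℕ) : Prop :=
  ccnt T v j = 1 ∧ ∀ k, k ≤ j →
    ∑ j' ∈ Finset.Icc k j, ccnt T w j' < ∑ j' ∈ Finset.Icc k j, ccnt T v j'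

def IsPick (T : cellsOf ν → Fin n) (v w : Fin n) (x : cellsOf ν) : Prop :=
  T x = v ∧ FreeP T v w x.1.2 ∧ ∀ j, x.1.2 < j → ¬ FreeP T v w j

theorem span' (p q : ℕ → ℕ) (hp : ∀ j, p j ≤ 1) (a b : ℕ) (hab : a ≤ b)
    (h : ∑ j ∈ Finset.Icc a b, q j < ∑ j ∈ Finset.Icc a b, p j) :
    ∃ j0, a ≤ j0 ∧ j0 ≤ b ∧ p j0 = 1 ∧ q j0 = 0 ∧
      ∀ k, a ≤ k → k ≤ j0 → ∑ j ∈ Finset.Icc k j0, q j < ∑ j ∈ Finset.Icc k j0, p j := by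
  set g : ℕ → ℤ := fun t => ∑ j ∈ Finset.Ico a t, ((p j : ℤ) - q j) with hg
  have hs : (Finset.Icc a (b+1)).Nonempty := ⟨a, by simp; omega⟩
  set M := (Finset.Icc a (b+1)).sup' hs g with hM
  obtain ⟨tw, htws, htweq⟩ := Finset.exists_mem_eq_sup' hs g
  have hfilne : ((Finset.Icc a (b+1)).filter (fun t => g t = M)).Nonempty :=
    ⟨tw, Finset.mem_filter.mpr ⟨htws, htweq.symm⟩⟩
  obtain ⟨t0, ht0mem, ht0min⟩ := Finset.exists_min_image _ id hfilne
  have ht0s := (Finset.mem_filter.mp ht0mem).1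
  have ht0eq : g t0 = M := (Finset.mem_filter.mp ht0mem).2
  have hle : ∀ t ∈ Finset.Icc a (b+1), g t ≤ M := fun t ht => Finset.le_sup' g ht
  have hlt : ∀ t ∈ Finset.Icc a (b+1), t < t0 → g t < M := by
    intro t ht htlt
    rcases lt_or_eq_of_le (hle t ht) with h' | h'
    · exact h'
    · exact absurd (ht0min t (Finset.mem_filter.mpr ⟨ht, h'⟩)) (by simpa using htlt)
  have hga : g a = 0 := by simp [hg]
  have hgb : 0 < g (b+1) := by
    have : Finset.Ico a (b+1) = Finset.Icc a b := by rw [Finset.Ico_add_one_right_eq_Icc]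
    have hcast : g (b+1) = (∑ j ∈ Finset.Icc a b, (p j:ℤ)) - ∑ j ∈ Finset.Icc a b, (q j:ℤ) := by
      show (∑ j ∈ Finset.Ico a (b+1), ((p j:ℤ) - q j)) = _
      rw [this, Finset.sum_sub_distrib]
    rw [hcast]
    have : (∑ j ∈ Finset.Icc a b, (q j:ℤ)) < ∑ j ∈ Finset.Icc a b, (p j:ℤ) := by
      exact_mod_cast h
    omega
  have hMpos : 0 < M := lt_of_lt_of_le hgb (hle _ (by simp; omega))
  have hat0 : a < t0 := by
    rcases Nat.lt_or_ge a t0 with h' | h'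
    · exact h'
    · have : t0 = a := by
        have := (Finset.mem_Icc.mp ht0s).1
        omega
      rw [this, hga] at ht0eq; omega
  set j0 := t0 - 1 with hj0
  have hj0a : a ≤ j0 := by omega
  have hj0b : j0 ≤ b := by have := (Finset.mem_Icc.mp ht0s).2; omega
  have ht0j : t0 = j0 + 1 := by omega
  have hsplit : ∀ k, a ≤ k → k ≤ j0 →
      g t0 - g k = ∑ j ∈ Finset.Icc k j0, ((p j : ℤ) - q j) := by
    intro k hak hkj
    have : Finset.Ico a t0 = Finset.Ico a k ∪ Finset.Ico k t0 := by
      rw [Finset.Ico_union_Ico_eq_Ico hak (by omega)]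
    rw [hg]
    simp only []
    rw [this, Finset.sum_union (by
      apply Finset.Ico_disjoint_Ico_consecutive)]
    have : Finset.Ico k t0 = Finset.Icc k j0 := by rw [ht0j, Finset.Ico_add_one_right_eq_Icc]
    rw [this]; ring
  have hkey : ∀ k, a ≤ k → k ≤ j0 →
      ∑ j ∈ Finset.Icc k j0, q j < ∑ j ∈ Finset.Icc k j0, p j := by
    intro k hak hkj
    have hks : k ∈ Finset.Icc a (b+1) := by simp; omega
    have : g k < M := hlt k hks (by omega)
    have h2 : 0 < ∑ j ∈ Finset.Icc k j0, ((p j : ℤ) - q j) := by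
      rw [← hsplit k hak hkj, ht0eq]; omega
    rw [Finset.sum_sub_distrib] at h2
    have : (∑ j ∈ Finset.Icc k j0, (q j:ℤ)) < ∑ j ∈ Finset.Icc k j0, (p j:ℤ) := by omega
    exact_mod_cast this
  have hpq : (q j0 : ℤ) < p j0 := by
    have := hkey j0 hj0a (le_refl _)
    have h2 : (∑ j ∈ Finset.Icc j0 j0, (q j:ℕ)) < ∑ j ∈ Finset.Icc j0 j0, p j := this
    simp at h2
    exact_mod_cast h2
  have hpj0 : p j0 = 1 := le_antisymm (hp j0) (by omega)
  have hqj0 : q j0 = 0 := by omega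
  exact ⟨j0, hj0a, hj0b, hpj0, hqj0, hkey⟩

theorem freeP_not_of_ge {T : cellsOf ν → Fin n} {v w : Fin n} {j : ℕ} (hj : n ≤ j) :
    ¬ FreeP T v w j := by
  rintro ⟨h1, -⟩
  have := (ccnt_pos_iff T v j).mp (by omega)
  obtain ⟨c, hc1, -⟩ := this
  have := (cell_lt c.1 c.2).2
  omega

open Classical in
theorem pick_exists {T : cellsOf ν → Fin n} (hcol : Cols T) {v w : Fin n}
    (h : cnt T w < cnt T v) : ∃ x, IsPick T v w x := by
  -- n ≥ 1
  have hn : 1 ≤ n := by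
    have : 0 < cnt T v := by omega
    rw [cnt, Finset.card_pos] at this
    obtain ⟨c, -⟩ := this
    have := (cell_lt c.1 c.2).2
    omega
  have hrange : Finset.range n = Finset.Icc 0 (n-1) := by
    ext j; simp [Finset.mem_range, Finset.mem_Icc]; omega
  have hsum : ∑ j ∈ Finset.Icc 0 (n-1), ccnt T w j < ∑ j ∈ Finset.Icc 0 (n-1), ccnt T v j := by
    rw [← hrange, sum_ccnt, sum_ccnt]; exact h
  obtain ⟨j0, -, hj0b, hp1, _, hkey⟩ :=
    span' (ccnt T v) (ccnt T w) (ccnt_le_one hcol v) 0 (n-1) (by omega) hsum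
  have hfree : FreeP T v w j0 := ⟨hp1, fun k hk => hkey k (Nat.zero_le _) hk⟩
  -- take the largest free column
  set jm := Nat.findGreatest (FreeP T v w) n with hjm
  have hjmfree : FreeP T v w jm :=
    Nat.findGreatest_spec (m := j0) (le_trans hj0b (Nat.sub_le n 1)) hfree
  have hjmmax : ∀ j, jm < j → ¬ FreeP T v w j := by
    intro j hj
    by_cases hjn : j ≤ n
    · exact Nat.findGreatest_is_greatest hj hjn
    · exact freeP_not_of_ge (by omega)
  obtain ⟨x, hx1, hx2⟩ := (ccnt_pos_iff T v jm).mp (by rw [hjmfree.1]; omega)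
  exact ⟨x, hx2, by rwa [hx1], by rw [hx1]; exact hjmmax⟩

end Pick

section Geometry
variable {n : ℕ} {ν : Nat.Partition n} {T : cellsOf ν → Fin n} {v w : Fin n}

theorem pick_no_w_col {j : ℕ} (hx : FreeP T v w j) : ccnt T w j = 0 := by
  have h1 := hx.1
  have := hx.2 j (le_refl _)
  simp only [Finset.Icc_self, Finset.sum_singleton] at this
  omega

theorem no_right_v (hrow : Rows T) (hcol : Cols T) (hvw : (w:ℕ) = (v:ℕ) + 1)
    {x : cellsOf ν} (hx : IsPick T v w x) :
    ¬ ∃ y : cellsOf ν, y.1.1 = x.1.1 ∧ y.1.2 = x.1.2 + 1 ∧ T y = v := by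
  rintro ⟨y, hy1, hy2, hy3⟩
  set j := x.1.2 with hj
  -- column j+1 has a v, hence ccnt = 1
  have hv1 : ccnt T v (j+1) = 1 := by
    have hpos : 0 < ccnt T v (j+1) := (ccnt_pos_iff T v (j+1)).mpr ⟨y, hy2, hy3⟩
    have := ccnt_le_one hcol v (j+1)
    omega
  -- column j+1 is not free, so it contains a w
  have hnf : ¬ FreeP T v w (j+1) := hx.2.2 (j+1) (by omega)
  have hw1 : 0 < ccnt T w (j+1) := by
    rw [FreeP] at hnf
    push_neg at hnf
    obtain ⟨k, hk1, hk2⟩ := hnf hv1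
    rcases Nat.lt_or_ge k (j+1) with hkj | hkj
    · -- k ≤ j : contradiction with freeness of column j
      exfalso
      have hfree := hx.2.1.2 k (by omega)
      rw [← hj] at hfree
      rw [Finset.sum_Icc_succ_top (by omega), Finset.sum_Icc_succ_top (by omega)] at hk2
      have h0 : ccnt T w j = 0 := pick_no_w_col hx.2.1
      have h1 : ccnt T v j = 1 := hx.2.1.1
      have hle := ccnt_le_one hcol w (j+1)
      omega
    · have hkeq : k = j + 1 := by omega
      subst hkeq
      simp only [Finset.Icc_self, Finset.sum_singleton] at hk2
      omega
  obtain ⟨z, hz1, hz2⟩ := (ccnt_pos_iff T w (j+1)).mp hw1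
  -- z is below y in column j+1
  have hzy : y.1.1 < z.1.1 := by
    rcases lt_trichotomy z.1.1 y.1.1 with h | h | h
    · have := hcol z y (by omega) h
      rw [hz2, hy3] at this
      rw [Fin.lt_def] at this
      omega
    · exfalso
      have : z = y := Subtype.ext (Prod.ext h (by omega))
      rw [this, hy3] at hz2
      have : (v:ℕ) = (w:ℕ) := by rw [hz2]
      omega
    · exact h
  -- the cell left of z
  have hmem : (z.1.1, j) ∈ cellsOf ν := by
    have : (z.1.1, j+1) ∈ cellsOf ν := by
      have := z.2
      have hz' : z.1 = (z.1.1, j+1) := Prod.ext rfl hz1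
      rwa [← hz']
    exact mem_cells_of_col_le this (by omega)
  set w' : cellsOf ν := ⟨(z.1.1, j), hmem⟩ with hw'
  have hle1 : T w' ≤ T z := hrow w' z (by simp [hw', hz1.symm]) (by simp [hw', hz1])
  have hlt1 : T x < T w' := hcol x w' (by simp [hw']; exact hj.symm) (by simp [hw']; omega)
  have hTx : T x = v := hx.1
  have : T w' = w := by
    apply Fin.ext
    rw [hz2] at hle1
    rw [hTx, Fin.lt_def] at hlt1
    rw [Fin.le_def] at hle1
    omega
  have hpos : 0 < ccnt T w j := (ccnt_pos_iff T w j).mpr ⟨w', rfl, this⟩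
  have h9 := pick_no_w_col hx.2.1
  rw [← hj] at h9
  omega

theorem update_rows (hrow : Rows T) (hcol : Cols T) (hvw : (w:ℕ) = (v:ℕ) + 1)
    {x : cellsOf ν} (hx : IsPick T v w x) :
    Rows (Function.update T x w) := by
  intro c d hcd1 hcd2
  by_cases hc : c = x
  · by_cases hd : d = x
    · rw [hc, hd]
    · rw [hc] at hcd1 hcd2 ⊢
      rw [Function.update_self, Function.update_of_ne hd]
      -- need w ≤ T d
      have h1 : T x ≤ T d := hrow x d hcd1 hcd2
      have h2 : T d ≠ v := by
        intro hdv
        -- v at x and at d in the same row ⇒ v at immediate right neighbor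
        apply no_right_v hrow hcol hvw hx
        have hmem : (x.1.1, x.1.2 + 1) ∈ cellsOf ν := by
          have hd' : (d.1.1, d.1.2) ∈ cellsOf ν := by
            have := d.2; rwa [Prod.mk.eta]
          have : (x.1.1, d.1.2) ∈ cellsOf ν := by rw [hcd1]; exact hd'
          exact mem_cells_of_col_le this (by omega)
        set z : cellsOf ν := ⟨(x.1.1, x.1.2 + 1), hmem⟩ with hz
        refine ⟨z, rfl, rfl, ?_⟩
        rcases Nat.lt_or_ge (x.1.2 + 1) d.1.2 with hlt | hge
        · have ha : T x ≤ T z := hrow x z rfl (by simp [hz])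
          have hb : T z ≤ T d := hrow z d hcd1 hlt
          rw [hx.1] at ha
          rw [hdv] at hb
          exact le_antisymm hb ha
        · have : z = d := Subtype.ext (Prod.ext hcd1 (by simp [hz]; omega))
          rw [this, hdv]
      -- T d ≥ v, ≠ v ⇒ (T d : ℕ) ≥ v+1 = w
      rw [hx.1] at h1
      rw [Fin.le_def] at h1 ⊢
      have : (T d : ℕ) ≠ (v : ℕ) := fun hh => h2 (Fin.ext hh)
      omega
  · by_cases hd : d = x
    · rw [hd] at hcd1 hcd2 ⊢
      rw [Function.update_self, Function.update_of_ne hc]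
      have h1 : T c ≤ T x := hrow c x hcd1 hcd2
      rw [hx.1] at h1
      rw [Fin.le_def] at h1 ⊢
      omega
    · rw [Function.update_of_ne hc, Function.update_of_ne hd]
      exact hrow c d hcd1 hcd2

theorem update_cols (hrow : Rows T) (hcol : Cols T) (hvw : (w:ℕ) = (v:ℕ) + 1)
    {x : cellsOf ν} (hx : IsPick T v w x) :
    Cols (Function.update T x w) := by
  intro c d hcd1 hcd2
  by_cases hc : c = x
  · rw [hc] at hcd1 hcd2 ⊢
    have hd : d ≠ x := by intro hh; rw [hh] at hcd2; omega
    rw [Function.update_self, Function.update_of_ne hd]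
    have h1 : T x < T d := hcol x d hcd1 hcd2
    have h2 : T d ≠ w := by
      intro hdw
      have : 0 < ccnt T w x.1.2 := (ccnt_pos_iff T w x.1.2).mpr ⟨d, hcd1.symm, hdw⟩
      have := pick_no_w_col hx.2.1
      omega
    rw [hx.1] at h1
    rw [Fin.lt_def] at h1 ⊢
    have : (T d : ℕ) ≠ (w : ℕ) := fun hh => h2 (Fin.ext hh)
    omega
  · by_cases hd : d = x
    · rw [hd] at hcd1 hcd2 ⊢
      rw [Function.update_self, Function.update_of_ne hc]
      have h1 : T c < T x := hcol c x hcd1 hcd2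
      rw [hx.1] at h1
      rw [Fin.lt_def] at h1 ⊢
      omega
    · rw [Function.update_of_ne hc, Function.update_of_ne hd]
      exact hcol c d hcd1 hcd2

end Geometry

section Update
variable {α β : Type*} [DecidableEq α] [DecidableEq β]

theorem filter_update_of_notmem' (s : Finset α) (T : α → β) (x : α) (v w : β) (hx : x ∉ s) :
    (s.filter fun y => Function.update T x v y = w) = s.filter fun y => T y = w := by
  apply Finset.filter_congr
  intro y hy
  rw [Function.update_apply, if_neg (by rintro rfl; exact hx hy)]

theorem card_filter_update_new (s : Finset α) (T : α → β) (x : α) (v : β) (hx : x ∈ s)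
    (hT : T x ≠ v) :
    (s.filter fun y => Function.update T x v y = v).card = (s.filter fun y => T y = v).card + 1 := by
  have : (s.filter fun y => Function.update T x v y = v) = insert x (s.filter fun y => T y = v) := by
    ext y
    simp only [Finset.mem_filter, Finset.mem_insert, Function.update_apply]
    by_cases hyx : y = x
    · subst hyx; simp [hx]
    · simp [hyx]
  rw [this, Finset.card_insert_of_notMem (by simp [hT])]

theorem card_filter_update_old (s : Finset α) (T : α → β) (x : α) (v : β) (hx : x ∈ s)
    (hT : T x ≠ v) :
    (s.filter fun y => Function.update T x v y = T x).card + 1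
      = (s.filter fun y => T y = T x).card := by
  have : (s.filter fun y => T y = T x) = insert x (s.filter fun y => Function.update T x v y = T x) := by
    ext y
    simp only [Finset.mem_filter, Finset.mem_insert, Function.update_apply]
    by_cases hyx : y = x
    · subst hyx; simp [hx]
    · simp [hyx]
  rw [this, Finset.card_insert_of_notMem (by simp [Ne.symm hT])]

theorem card_filter_update_other (s : Finset α) (T : α → β) (x : α) (v w : β)
    (hw1 : w ≠ v) (hw2 : w ≠ T x) :
    (s.filter fun y => Function.update T x v y = w).card = (s.filter fun y => T y = w).card := by
  congr 1
  apply Finset.filter_congr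
  intro y hy
  rw [Function.update_apply]
  by_cases hyx : y = x
  · subst hyx; simp [Ne.symm hw1, Ne.symm hw2]
  · simp [hyx]

end Update

section CcntUpdate
variable {n : ℕ} {ν : Nat.Partition n} {T : cellsOf ν → Fin n} {v w : Fin n} {x : cellsOf ν}

theorem vw_ne (hvw : (w:ℕ) = (v:ℕ) + 1) : v ≠ w := by
  intro h; rw [h] at hvw; omega

theorem ccnt_update_v (hTx : T x = v) (hne : v ≠ w) :
    ccnt (Function.update T x w) v x.1.2 + 1 = ccnt T v x.1.2 := by
  have h := card_filter_update_old (Finset.univ.filter fun c : cellsOf ν => c.1.2 = x.1.2)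
    T x w (by simp) (by rw [hTx]; exact hne)
  rw [hTx] at h
  exact h

theorem ccnt_update_w (hTx : T x = v) (hne : v ≠ w) :
    ccnt (Function.update T x w) w x.1.2 = ccnt T w x.1.2 + 1 :=
  card_filter_update_new _ T x w (by simp) (by rw [hTx]; exact hne)

theorem ccnt_update_col_ne (u : Fin n) {j : ℕ} (hj : j ≠ x.1.2) :
    ccnt (Function.update T x w) u j = ccnt T u j := by
  rw [ccnt, ccnt, filter_update_of_notmem' _ T x w u (by simp [Ne.symm hj])]

theorem ccnt_update_val_ne (hTx : T x = v) {u : Fin n} (h1 : u ≠ w) (h2 : u ≠ v) (j : ℕ) :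
    ccnt (Function.update T x w) u j = ccnt T u j :=
  card_filter_update_other _ T x w u h1 (by rw [hTx]; exact h2)

theorem cnt_update_v (hTx : T x = v) (hne : v ≠ w) :
    cnt (Function.update T x w) v + 1 = cnt T v := by
  have h := card_filter_update_old (Finset.univ (α := {y // y ∈ cellsOf ν}))
    T x w (by simp) (by rw [hTx]; exact hne)
  rw [hTx] at h
  exact h

theorem cnt_update_w (hTx : T x = v) (hne : v ≠ w) :
    cnt (Function.update T x w) w = cnt T w + 1 :=
  card_filter_update_new _ T x w (by simp) (by rw [hTx]; exact hne)

theorem cnt_update_val_ne (hTx : T x = v) {u : Fin n} (h1 : u ≠ w) (h2 : u ≠ v) :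
    cnt (Function.update T x w) u = cnt T u :=
  card_filter_update_other _ T x w u h1 (by rw [hTx]; exact h2)

end CcntUpdate

section FreeM
variable {n : ℕ} {ν : Nat.Partition n} {T : cellsOf ν → Fin n} {v w : Fin n} {x : cellsOf ν}

def FreeM (T : cellsOf ν → Fin n) (v w : Fin n) (j : ℕ) : Prop :=
  ∀ k, j ≤ k → ∑ j' ∈ Finset.Icc j k, ccnt T v j' < ∑ j' ∈ Finset.Icc j k, ccnt T w j'

theorem freeM_of_pick (hcol : Cols T) (hvw : (w:ℕ) = (v:ℕ) + 1)
    (hx : IsPick T v w x) : FreeM (Function.update T x w) v w x.1.2 := by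
  have hne := vw_ne hvw
  have hUv : ccnt (Function.update T x w) v x.1.2 = 0 := by
    have h := ccnt_update_v hx.1 hne
    have h2 : ccnt T v x.1.2 = 1 := hx.2.1.1
    omega
  have hUw : ccnt (Function.update T x w) w x.1.2 = 1 := by
    have h := ccnt_update_w hx.1 hne
    have h2 : ccnt T w x.1.2 = 0 := pick_no_w_col hx.2.1
    omega
  intro k hk
  rcases Nat.eq_or_lt_of_le hk with heq | hlt
  · rw [← heq]
    simp only [Finset.Icc_self, Finset.sum_singleton]
    omega
  · rw [sum_Icc_split (fun j' => ccnt (Function.update T x w) v j') x.1.2 x.1.2 k (by omega) (by omega),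
        sum_Icc_split (fun j' => ccnt (Function.update T x w) w j') x.1.2 x.1.2 k (by omega) (by omega)]
    simp only [Finset.Icc_self, Finset.sum_singleton]
    have hAv : ∑ j' ∈ Finset.Icc (x.1.2+1) k, ccnt (Function.update T x w) v j'
        = ∑ j' ∈ Finset.Icc (x.1.2+1) k, ccnt T v j' := by
      apply Finset.sum_congr rfl
      intro j' hj'
      have := Finset.mem_Icc.mp hj'
      exact ccnt_update_col_ne v (by omega)
    have hAw : ∑ j' ∈ Finset.Icc (x.1.2+1) k, ccnt (Function.update T x w) w j'
        = ∑ j' ∈ Finset.Icc (x.1.2+1) k, ccnt T w j' := by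
      apply Finset.sum_congr rfl
      intro j' hj'
      have := Finset.mem_Icc.mp hj'
      exact ccnt_update_col_ne w (by omega)
    rw [hAv, hAw, hUv, hUw]
    have hAB : ∑ j' ∈ Finset.Icc (x.1.2+1) k, ccnt T v j'
        ≤ ∑ j' ∈ Finset.Icc (x.1.2+1) k, ccnt T w j' := by
      by_contra hcon
      push_neg at hcon
      obtain ⟨j0, hj0a, hj0b, hv1, hw0, hpart⟩ :=
        span' (ccnt T v) (ccnt T w) (ccnt_le_one hcol v) (x.1.2+1) k (by omega) hcon
      apply hx.2.2 j0 (by omega)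
      refine ⟨hv1, ?_⟩
      intro k' hk'
      rcases Nat.lt_or_ge k' (x.1.2+1) with hk'j | hk'j
      · rw [sum_Icc_split (fun j' => ccnt T v j') k' x.1.2 j0 (by omega) (by omega),
            sum_Icc_split (fun j' => ccnt T w j') k' x.1.2 j0 (by omega) (by omega)]
        have h1 := hx.2.1.2 k' (by omega)
        have h2 := hpart (x.1.2+1) (le_refl _) (by omega)
        omega
      · exact hpart k' hk'j hk'
    omega

theorem not_freeM_lt (hvw : (w:ℕ) = (v:ℕ) + 1)
    (hx : IsPick T v w x) {k : ℕ} (hk : k < x.1.2) :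
    ¬ FreeM (Function.update T x w) v w k := by
  intro hFM
  have hne := vw_ne hvw
  obtain ⟨m, hjm⟩ : ∃ m, x.1.2 = m + 1 := ⟨x.1.2 - 1, by omega⟩
  have h1 := hFM m (by omega)
  have hv : ∑ j' ∈ Finset.Icc k m, ccnt (Function.update T x w) v j'
      = ∑ j' ∈ Finset.Icc k m, ccnt T v j' := by
    apply Finset.sum_congr rfl
    intro j' hj'
    have := Finset.mem_Icc.mp hj'
    exact ccnt_update_col_ne v (by omega)
  have hw : ∑ j' ∈ Finset.Icc k m, ccnt (Function.update T x w) w j'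
      = ∑ j' ∈ Finset.Icc k m, ccnt T w j' := by
    apply Finset.sum_congr rfl
    intro j' hj'
    have := Finset.mem_Icc.mp hj'
    exact ccnt_update_col_ne w (by omega)
  rw [hv, hw] at h1
  have h2 := hx.2.1.2 k (by omega)
  rw [hjm] at h2
  rw [Finset.sum_Icc_succ_top (by omega), Finset.sum_Icc_succ_top (by omega)] at h2
  have h3 : ccnt T w (m+1) = 0 := by
    have := pick_no_w_col hx.2.1
    rwa [hjm] at this
  have h4 : ccnt T v (m+1) = 1 := by
    have := hx.2.1.1
    rwa [hjm] at this
  omega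

theorem pick_unique {T1 T2 : cellsOf ν → Fin n} {x1 x2 : cellsOf ν}
    (hcol1 : Cols T1) (hcol2 : Cols T2) (hvw : (w:ℕ) = (v:ℕ) + 1)
    (h1 : IsPick T1 v w x1) (h2 : IsPick T2 v w x2)
    (hU : Function.update T1 x1 w = Function.update T2 x2 w) : T1 = T2 := by
  have hne := vw_ne hvw
  -- the columns agree
  have hcols : x1.1.2 = x2.1.2 := by
    have f1 : FreeM (Function.update T1 x1 w) v w x1.1.2 := freeM_of_pick hcol1 hvw h1
    have f2 : FreeM (Function.update T2 x2 w) v w x2.1.2 := freeM_of_pick hcol2 hvw h2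
    rcases lt_trichotomy x1.1.2 x2.1.2 with h | h | h
    · exact absurd (hU ▸ f1) (not_freeM_lt hvw h2 h)
    · exact h
    · exact absurd (hU.symm ▸ f2) (not_freeM_lt hvw h1 h)
  -- the cells agree
  have hcell : x1 = x2 := by
    have hU1 : Function.update T1 x1 w x1 = w := Function.update_self _ _ _
    have hU2 : Function.update T1 x1 w x2 = w := by rw [hU]; exact Function.update_self _ _ _
    have hc1 : ccnt (Function.update T1 x1 w) w x1.1.2 = 1 := by
      rw [ccnt_update_w h1.1 hne]
      have := pick_no_w_col h1.2.1
      omega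
    have hmem1 : x1 ∈ (Finset.univ.filter fun c : cellsOf ν => c.1.2 = x1.1.2).filter
        (fun c => Function.update T1 x1 w c = w) := by
      simp only [Finset.mem_filter, Finset.mem_univ, true_and]
      first
      | exact hU1
      | exact ⟨rfl, hU1⟩
    have hmem2 : x2 ∈ (Finset.univ.filter fun c : cellsOf ν => c.1.2 = x1.1.2).filter
        (fun c => Function.update T1 x1 w c = w) := by
      simp only [Finset.mem_filter, Finset.mem_univ, true_and]
      exact ⟨hcols.symm, hU2⟩
    exact Finset.card_le_one.mp (le_of_eq hc1) x1 hmem1 x2 hmem2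
  -- recover
  subst hcell
  funext y
  by_cases hy : y = x1
  · rw [hy, h1.1, h2.1]
  · have := congrFun hU y
    rwa [Function.update_of_ne hy, Function.update_of_ne hy] at this

end FreeM

section Kostka
variable {n : ℕ}

noncomputable def kostkaF (ν : Nat.Partition n) (c : ℕ → ℕ) : ℕ :=
  Nat.card {T : cellsOf ν → Fin n // Rows T ∧ Cols T ∧ ∀ i : Fin n, cnt T i = c (i : ℕ)}

theorem kostkaF_step (ν : Nat.Partition n) (c : ℕ → ℕ) (r : ℕ) (hr1 : r + 1 < n)
    (hc : c (r+1) < c r) :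
    kostkaF ν c ≤ kostkaF ν
      (fun m => if m = r then c r - 1 else if m = r+1 then c (r+1) + 1 else c m) := by
  classical
  have hrn : r < n := by omega
  set v : Fin n := ⟨r, hrn⟩ with hvdef
  set w : Fin n := ⟨r+1, hr1⟩ with hwdef
  have hvw : (w:ℕ) = (v:ℕ) + 1 := rfl
  have hne : v ≠ w := vw_ne hvw
  have key : ∀ T : {T : cellsOf ν → Fin n // Rows T ∧ Cols T ∧ ∀ i : Fin n, cnt T i = c (i : ℕ)},
      ∃ x, IsPick T.1 v w x := by
    rintro ⟨T, hT⟩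
    apply pick_exists hT.2.1
    have h1 : cnt T v = c r := hT.2.2 v
    have h2 : cnt T w = c (r+1) := hT.2.2 w
    omega
  choose pk hpk using key
  have main : ∀ T, Rows (Function.update T.1 (pk T) w) ∧ Cols (Function.update T.1 (pk T) w) ∧
      ∀ i : Fin n, cnt (Function.update T.1 (pk T) w) i =
        (fun m => if m = r then c r - 1 else if m = r+1 then c (r+1) + 1 else c m) (i : ℕ) := by
    intro T
    obtain ⟨hrow, hcol, hcnt⟩ := T.2
    refine ⟨update_rows hrow hcol hvw (hpk T), update_cols hrow hcol hvw (hpk T), ?_⟩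
    intro i
    by_cases hiv : i = v
    · subst hiv
      have h := cnt_update_v (hpk T).1 hne
      have h1 : cnt T.1 v = c r := hcnt v
      have hg : (fun m => if m = r then c r - 1 else if m = r+1 then c (r+1) + 1 else c m) ((v:ℕ))
          = c r - 1 := by norm_num [hvdef]
      rw [hg]
      omega
    · by_cases hiw : i = w
      · subst hiw
        have h := cnt_update_w (hpk T).1 hne
        have h2 : cnt T.1 w = c (r+1) := hcnt w
        have hg : (fun m => if m = r then c r - 1 else if m = r+1 then c (r+1) + 1 else c m) ((w:ℕ))
            = c (r+1) + 1 := by norm_num [hwdef]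
        rw [hg]
        omega
      · have h := cnt_update_val_ne (T := T.1) (x := pk T) (hpk T).1 hiw hiv
        have h2 : cnt T.1 i = c (i:ℕ) := hcnt i
        have hir : (i:ℕ) ≠ r := fun hh => hiv (Fin.ext hh)
        have hir1 : (i:ℕ) ≠ r+1 := fun hh => hiw (Fin.ext hh)
        have hg : (fun m => if m = r then c r - 1 else if m = r+1 then c (r+1) + 1 else c m) ((i:ℕ))
            = c (i:ℕ) := by simp [hir, hir1]
        rw [hg, h, h2]
  exact Nat.card_le_card_of_injective
    (fun T => ⟨Function.update T.1 (pk T) w, main T⟩)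
    (by
      rintro T1 T2 hEq
      have h' : Function.update T1.1 (pk T1) w = Function.update T2.1 (pk T2) w :=
        congrArg Subtype.val hEq
      exact Subtype.ext (pick_unique T1.2.2.1 T2.2.2.1 hvw (hpk T1) (hpk T2) h'))

end Kostka

section Chain
variable {n : ℕ}

def pre (g : ℕ → ℕ) (i : ℕ) : ℕ := ∑ j ∈ Finset.range i, g j

theorem kostkaF_congr (ν : Nat.Partition n) {c c' : ℕ → ℕ} (h : ∀ i, i < n → c i = c' i) :
    kostkaF ν c = kostkaF ν c' := by
  apply Nat.card_congr
  apply Equiv.subtypeEquivRight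
  intro T
  constructor <;> rintro ⟨h1, h2, h3⟩ <;> refine ⟨h1, h2, fun i => ?_⟩
  · rw [h3 i, h i i.isLt]
  · rw [h3 i, h i i.isLt]

theorem chain_le (f : ℕ → ℕ) (lo : ℕ) :
    ∀ hi, lo ≤ hi → (∀ t, lo ≤ t → t + 1 ≤ hi → f t ≤ f (t+1)) → f lo ≤ f hi := by
  intro hi
  induction hi with
  | zero =>
    intro h _
    have : lo = 0 := by omega
    rw [this]
  | succ m ih =>
    intro hlo hstep
    rcases Nat.eq_or_lt_of_le hlo with heq | hlt
    · rw [heq]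
    · exact le_trans (ih (by omega) (fun t ht1 ht2 => hstep t ht1 (by omega)))
        (hstep m (by omega) (le_refl _))

open Classical in
theorem kostkaF_chain (ν : Nat.Partition n) (μf : ℕ → ℕ)
    (hanti : ∀ i j, i ≤ j → μf j ≤ μf i)
    (hμtot : pre μf n = n) :
    ∀ M c, pre c n = n → (∀ i, i ≤ n → pre μf i ≤ pre c i) →
      (∑ i ∈ Finset.range (n+1), (pre c i - pre μf i)) ≤ M →
      kostkaF ν c ≤ kostkaF ν μf := by
  intro M
  induction M with
  | zero =>
    intro c hctot hdom hM
    have hz : ∀ i, i ≤ n → pre c i = pre μf i := by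
      intro i hi
      have hmem : i ∈ Finset.range (n+1) := Finset.mem_range.mpr (by omega)
      have : pre c i - pre μf i = 0 := by
        by_contra hne
        have hpos : 0 < pre c i - pre μf i := Nat.pos_of_ne_zero hne
        have hsle : pre c i - pre μf i ≤ ∑ x ∈ Finset.range (n+1), (pre c x - pre μf x) :=
          Finset.single_le_sum (f := fun x => pre c x - pre μf x) (fun j _ => Nat.zero_le _) hmem
        omega
      have := hdom i hi
      omega
    apply le_of_eq
    apply kostkaF_congr
    intro i hi
    have h1 := hz i (by omega)
    have h2 := hz (i+1) (by omega)
    rw [pre, pre, Finset.sum_range_succ, Finset.sum_range_succ] at h2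
    rw [pre, pre] at h1
    omega
  | succ M ih =>
    intro c hctot hdom hM
    by_cases hend : ∀ i, i ≤ n → pre c i ≤ pre μf i
    · -- all prefixes equal, done
      apply le_of_eq
      apply kostkaF_congr
      intro i hi
      have h1 : pre c i = pre μf i := le_antisymm (hend i (by omega)) (hdom i (by omega))
      have h2 : pre c (i+1) = pre μf (i+1) := le_antisymm (hend _ (by omega)) (hdom _ (by omega))
      rw [pre, pre, Finset.sum_range_succ, Finset.sum_range_succ] at h2
      rw [pre, pre] at h1
      omega
    · push_neg at hend
      obtain ⟨i0, hi0n, hi0⟩ := hend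
      -- least index with a strict prefix inequality
      have hP0 : ∃ i, pre μf i < pre c i := ⟨i0, hi0⟩
      set a := Nat.find hP0 with ha
      have hPa : pre μf a < pre c a := Nat.find_spec hP0
      have hamin : ∀ i, i < a → ¬ (pre μf i < pre c i) := fun i hi => Nat.find_min hP0 hi
      have ha1 : 1 ≤ a := by
        rcases Nat.eq_zero_or_pos a with h | h
        · exfalso; rw [h] at hPa; simp [pre] at hPa
        · exact h
      have han : a ≤ n := le_trans (Nat.find_min' hP0 hi0) hi0n
      have haltn : a < n := by
        rcases Nat.lt_or_ge a n with h | h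
        · exact h
        · exfalso
          have : a = n := by omega
          rw [this, hμtot, hctot] at hPa
          omega
      -- least index above a where prefixes agree again
      have hQ0 : ∃ i, a < i ∧ pre c i = pre μf i := ⟨n, ⟨by omega, by rw [hctot, hμtot]⟩⟩
      set b := Nat.find hQ0 with hb
      have hQb : a < b ∧ pre c b = pre μf b := Nat.find_spec hQ0
      have hbmin : ∀ i, i < b → ¬ (a < i ∧ pre c i = pre μf i) := fun i hi => Nat.find_min hQ0 hi
      have hbn : b ≤ n := Nat.find_min' hQ0 ⟨by omega, by rw [hctot, hμtot]⟩
      have hstrict : ∀ i, a ≤ i → i < b → pre μf i < pre c i := by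
        intro i h1 h2
        rcases Nat.eq_or_lt_of_le h1 with h | h
        · rw [← h]; exact hPa
        · have := hbmin i h2
          have hne : pre c i ≠ pre μf i := by tauto
          have := hdom i (by omega)
          omega
      -- there is a descent in [a-1, b-1]
      have hdesc : ∃ t, a - 1 ≤ t ∧ t + 1 ≤ b - 1 ∧ c (t+1) < c t := by
        by_contra hcon
        push_neg at hcon
        obtain ⟨a', ha'⟩ : ∃ m, a = m + 1 := ⟨a-1, by omega⟩
        obtain ⟨b', hb'⟩ : ∃ m, b = m + 1 := ⟨b-1, by omega⟩
        have hchain : c a' ≤ c b' :=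
          chain_le c a' b' (by omega) (fun t ht1 ht2 => hcon t (by omega) (by omega))
        have hPa1 : pre c a' = pre μf a' := by
          have h := hamin a' (by omega)
          have := hdom a' (by omega)
          omega
        have hsa : pre c a = pre c a' + c a' := by rw [ha', pre, pre, Finset.sum_range_succ]
        have hsa' : pre μf a = pre μf a' + μf a' := by rw [ha', pre, pre, Finset.sum_range_succ]
        have h1 : μf a' < c a' := by omega
        have hPb1 : pre μf b' < pre c b' := hstrict b' (by omega) (by omega)
        have hsb : pre c b = pre c b' + c b' := by rw [hb', pre, pre, Finset.sum_range_succ]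
        have hsb' : pre μf b = pre μf b' + μf b' := by rw [hb', pre, pre, Finset.sum_range_succ]
        have h2 : c b' < μf b' := by
          have := hQb.2
          omega
        have h3 : μf b' ≤ μf a' := hanti _ _ (by omega)
        omega
      obtain ⟨t, hta, htb, hdes⟩ := hdesc
      have ht1n : t + 1 < n := by omega
      -- apply the crystal step
      set c' : ℕ → ℕ := fun m => if m = t then c t - 1 else if m = t+1 then c (t+1) + 1 else c m
        with hc'
      have hstep : kostkaF ν c ≤ kostkaF ν c' := kostkaF_step ν c t ht1n hdes
      -- prefix sums of c'
      have hpre_le : ∀ i, i ≤ t → pre c' i = pre c i := by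
        intro i hi
        rw [pre, pre]
        apply Finset.sum_congr rfl
        intro j hj
        have := Finset.mem_range.mp hj
        rw [hc']
        simp only []
        rw [if_neg (by omega), if_neg (by omega)]
      have hct : 1 ≤ c t := by omega
      have hpre_t1 : pre c' (t+1) + 1 = pre c (t+1) := by
        have h0 := hpre_le t (le_refl t)
        rw [pre, pre] at h0
        have h1 : c' t = c t - 1 := by rw [hc']; simp
        rw [pre, pre, Finset.sum_range_succ, Finset.sum_range_succ, h1]
        omega
      have hpre_ge : ∀ i, t + 2 ≤ i → pre c' i = pre c i := by
        intro i
        induction i with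
        | zero => omega
        | succ m ihm =>
          intro hm
          rcases Nat.eq_or_lt_of_le hm with h | h
          · have hmt : m = t + 1 := by omega
            rw [pre, pre, Finset.sum_range_succ, Finset.sum_range_succ, hmt]
            have h1 : c' (t+1) = c (t+1) + 1 := by rw [hc']; simp
            rw [h1]
            have := hpre_t1
            rw [pre, pre] at this
            omega
          · rw [pre, pre, Finset.sum_range_succ, Finset.sum_range_succ]
            have h1 : c' m = c m := by
              rw [hc']
              simp only []
              rw [if_neg (by omega), if_neg (by omega)]
            rw [h1]
            have := ihm (by omega)
            rw [pre, pre] at this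
            omega
      have hpre_ne : ∀ i, i ≠ t + 1 → pre c' i = pre c i := by
        intro i hi
        rcases Nat.lt_or_ge i (t+1) with h | h
        · exact hpre_le i (by omega)
        · exact hpre_ge i (by omega)
      -- total is preserved
      have hctot' : pre c' n = n := by rw [hpre_ne n (by omega), hctot]
      -- dominance is preserved
      have hdom' : ∀ i, i ≤ n → pre μf i ≤ pre c' i := by
        intro i hi
        by_cases h : i = t + 1
        · subst h
          have := hstrict (t+1) (by omega) (by omega)
          omega
        · rw [hpre_ne i h]; exact hdom i hi
      -- the measure decreases
      have hmes : (∑ i ∈ Finset.range (n+1), (pre c' i - pre μf i)) + 1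
          ≤ ∑ i ∈ Finset.range (n+1), (pre c i - pre μf i) := by
        have hmem : t + 1 ∈ Finset.range (n+1) := Finset.mem_range.mpr (by omega)
        rw [← Finset.add_sum_erase _ _ hmem, ← Finset.add_sum_erase _ _ hmem]
        have hsame : ∑ i ∈ (Finset.range (n+1)).erase (t+1), (pre c' i - pre μf i)
            = ∑ i ∈ (Finset.range (n+1)).erase (t+1), (pre c i - pre μf i) := by
          apply Finset.sum_congr rfl
          intro i hi
          rw [hpre_ne i (Finset.ne_of_mem_erase hi)]
        rw [hsame]
        have h1 := hstrict (t+1) (by omega) (by omega)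
        have h2 := hpre_t1
        omega
      exact le_trans hstep (ih c' hctot' hdom' (by omega))

end Chain

theorem partSeq_anti' {n : ℕ} (p : Nat.Partition n) {i j : ℕ} (hij : i ≤ j) :
    partSeq p j ≤ partSeq p i := partSeq_anti p hij

theorem pre_partSeq_total {n : ℕ} (p : Nat.Partition n) : pre (partSeq p) n = n :=
  sum_partSeq_aux p

/-- Monotonicity of Kostka numbers in the dominance order: if `μ ⊴ l` then
`K_{νμ} ≥ K_{νl}` for every partition `ν` of `n`. -/
theorem kostka_antitone_dominance (n : ℕ) (l μ ν : Nat.Partition n)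
    (h : Dominates l μ) : kostka ν l ≤ kostka ν μ := by
  have h1 : kostka ν l = kostkaF ν (partSeq l) := rfl
  have h2 : kostka ν μ = kostkaF ν (partSeq μ) := rfl
  rw [h1, h2]
  exact kostkaF_chain ν (partSeq μ) (fun i j hij => partSeq_anti' μ hij)
    (pre_partSeq_total μ)
    (∑ i ∈ Finset.range (n+1), (pre (partSeq l) i - pre (partSeq μ) i))
    (partSeq l) (pre_partSeq_total l) (fun i _ => h i) (le_refl _)
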